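/- arXiv:1206.3090 — 2 statements merged into one kernel-verified Lean document; each statement's English description precedes it below -/
import Mathlib

section
/- Let K be a field of characteristic zero, let I be an ideal of K[x_1,…,x_n], and let μ ≥ 1. Then for every point a ∈ K^n, H(I) ⊆ m_a^μ if and only if I ⊆ m_a^μ; that is, the homogenized ideal has the same support as the original: supp(H(I),μ) = supp(I,μ). -/
/-- The maximal ideal of `K[x_i : i ∈ σ]` at the point `a`. -/
noncomputable def maxIdeal (K : Type*) [Field K] (σ : Type*) (a : σ → K) :
    Ideal (MvPolynomial σ K) :=
  Ideal.span (Set.range fun i => MvPolynomial.X i - MvPolynomial.C (a i))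

/-- The derivative ideal `D(I)`: generated by all elements of `I` together with all
their first partial derivatives. -/
noncomputable def derivIdeal {K : Type*} [Field K] {σ : Type*}
    (I : Ideal (MvPolynomial σ K)) : Ideal (MvPolynomial σ K) :=
  Ideal.span ((I : Set (MvPolynomial σ K)) ∪
    {g | ∃ f ∈ I, ∃ j : σ, g = MvPolynomial.pderiv j f})

/-- The iterated derivative ideal `D^i(I)`. -/
noncomputable def derivIdealIter {K : Type*} [Field K] {σ : Type*}
    (i : ℕ) (I : Ideal (MvPolynomial σ K)) : Ideal (MvPolynomial σ K) :=
  derivIdeal^[i] I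

/-- The homogenized ideal
`H(I) = I + D(I)·T(I) + … + D^{μ-1}(I)·T(I)^{μ-1}` where `T(I) = D^{μ-1}(I)`. -/
noncomputable def homogIdeal {K : Type*} [Field K] {σ : Type*}
    (μ : ℕ) (I : Ideal (MvPolynomial σ K)) : Ideal (MvPolynomial σ K) :=
  ∑ i ∈ Finset.range μ, derivIdealIter i I * (derivIdealIter (μ - 1) I) ^ i

lemma pderiv_mem_pow {K : Type*} [Field K] {σ : Type*} (a : σ → K) (j : σ) :
    ∀ k : ℕ, ∀ f ∈ maxIdeal K σ a ^ (k + 1),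
      MvPolynomial.pderiv j f ∈ maxIdeal K σ a ^ k := by
  intro k
  induction k with
  | zero => intro f _; simp
  | succ k ih =>
    intro f hf
    rw [pow_succ] at hf
    refine Submodule.mul_induction_on hf ?_ ?_
    · intro p hp q hq
      rw [MvPolynomial.pderiv_mul]
      exact Ideal.add_mem _
        (by rw [pow_succ]; exact Ideal.mul_mem_mul (ih p hp) hq)
        (Ideal.mul_mem_right _ _ hp)
    · intro x y hx hy
      rw [map_add]
      exact Ideal.add_mem _ hx hy

lemma derivIdeal_le_pow {K : Type*} [Field K] {σ : Type*} (a : σ → K) {k : ℕ}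
    {J : Ideal (MvPolynomial σ K)} (h : J ≤ maxIdeal K σ a ^ k) :
    derivIdeal J ≤ maxIdeal K σ a ^ (k - 1) := by
  rw [derivIdeal, Ideal.span_le]
  rintro g (hg | ⟨f, hf, j, rfl⟩)
  · exact Ideal.pow_le_pow_right (Nat.sub_le k 1) (h hg)
  · cases k with
    | zero => simp
    | succ k => exact pderiv_mem_pow a j k f (h hf)

lemma derivIdealIter_le_pow {K : Type*} [Field K] {σ : Type*} (a : σ → K) {μ : ℕ}
    {I : Ideal (MvPolynomial σ K)} (h : I ≤ maxIdeal K σ a ^ μ) (i : ℕ) :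
    derivIdealIter i I ≤ maxIdeal K σ a ^ (μ - i) := by
  induction i with
  | zero => simpa [derivIdealIter] using h
  | succ i ih =>
    have : derivIdealIter (i + 1) I = derivIdeal (derivIdealIter i I) := by
      simp [derivIdealIter, Function.iterate_succ_apply']
    rw [this]
    have := derivIdeal_le_pow a ih
    rwa [Nat.sub_sub] at this

lemma sum_ideal_le {R : Type*} [CommRing R] {ι : Type*} (s : Finset ι)
    (f : ι → Ideal R) (J : Ideal R) (h : ∀ i ∈ s, f i ≤ J) :
    ∑ i ∈ s, f i ≤ J := by
  classical
  induction s using Finset.induction with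
  | empty => simp
  | @insert a s hx ih =>
    rw [Finset.sum_insert hx, Submodule.add_eq_sup, sup_le_iff]
    exact ⟨h _ (Finset.mem_insert_self _ _),
      ih fun i hi => h i (Finset.mem_insert_of_mem hi)⟩

/-- The homogenized ideal has the same support as the original:
`H(I) ⊆ m_a^μ ↔ I ⊆ m_a^μ` for every point `a`. -/
theorem supp_homogIdeal (K : Type*) [Field K] [CharZero K] (n : ℕ)
    (I : Ideal (MvPolynomial (Fin n) K)) (μ : ℕ) (hμ : 1 ≤ μ) (a : Fin n → K) :
    homogIdeal μ I ≤ maxIdeal K (Fin n) a ^ μ ↔ I ≤ maxIdeal K (Fin n) a ^ μ := by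
  constructor
  · intro h
    refine le_trans ?_ h
    have h0 : I = derivIdealIter 0 I * (derivIdealIter (μ - 1) I) ^ 0 := by
      simp [derivIdealIter]
    rw [homogIdeal]
    calc I = derivIdealIter 0 I * (derivIdealIter (μ - 1) I) ^ 0 := h0
      _ ≤ _ := Finset.single_le_sum (f := fun i => derivIdealIter i I *
            (derivIdealIter (μ - 1) I) ^ i) (fun i _ => bot_le)
            (Finset.mem_range.mpr hμ)
  · intro h
    rw [homogIdeal]
    refine sum_ideal_le _ _ _ fun i hi => ?_
    rw [Finset.mem_range] at hi
    have h1 : derivIdealIter i I ≤ maxIdeal K (Fin n) a ^ (μ - i) :=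
      derivIdealIter_le_pow a h i
    have h2 : derivIdealIter (μ - 1) I ≤ maxIdeal K (Fin n) a := by
      have := derivIdealIter_le_pow a h (μ - 1)
      have e : μ - (μ - 1) = 1 := by omega
      rwa [e, pow_one] at this
    calc derivIdealIter i I * (derivIdealIter (μ - 1) I) ^ i
        ≤ maxIdeal K (Fin n) a ^ (μ - i) * (maxIdeal K (Fin n) a) ^ i :=
          mul_le_mul' h1 (Ideal.pow_right_mono h2 i)
      _ = maxIdeal K (Fin n) a ^ μ := by rw [← pow_add]; congr 1; omega
end

section
/- Let K be a field, let 1 ≤ k ≤ n, and let f ∈ K[x_1,…,x_n]. Write f = Σ_α c_α·x^α, where α ranges over multi-indices supported on the first k variables x_1,…,x_k and each coefficient c_α lies in K[x_{k+1},…,x_n]. Let b ∈ K^{n−k} and let a = (0,…,0,b) ∈ K^n be the corresponding point of the subspace {x_1 = … = x_k = 0}. Then for every natural number μ: f ∈ m_a^μ if and only if c_α ∈ m_b^{μ−|α|} (in K[x_{k+1},…,x_n]) for every multi-index α with |α| < μ. -/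
open MvPolynomial

section Aux
variable {K : Type*} [Field K] {σ τ : Type*}

lemma deg_add (s t : σ →₀ ℕ) : (s + t).sum (fun _ e => e) = s.sum (fun _ e => e) + t.sum (fun _ e => e) :=
  Finsupp.sum_add_index' (fun _ => rfl) (fun _ _ _ => rfl)

lemma deg_single (i : σ) (e : ℕ) : (Finsupp.single i e).sum (fun _ e => e) = e :=
  Finsupp.sum_single_index rfl

lemma deg_mono {s t : σ →₀ ℕ} (h : s ≤ t) :
    s.sum (fun _ e => e) ≤ t.sum (fun _ e => e) := by
  obtain ⟨c, rfl⟩ := le_iff_exists_add.mp h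
  rw [deg_add]; exact Nat.le_add_right _ _

lemma maxIdeal_zero : maxIdeal K σ 0 = Ideal.span (Set.range (X : σ → MvPolynomial σ K)) := by
  simp [maxIdeal]

lemma monomial_mem_pow (s : σ →₀ ℕ) :
    (monomial s (1 : K)) ∈
      Ideal.span (Set.range (X : σ → MvPolynomial σ K)) ^ (s.sum fun _ e => e) := by
  induction s using Finsupp.induction with
  | zero => simp
  | single_add i e s _ _ ih =>
      rw [monomial_single_add, deg_add, deg_single, pow_add]
      exact Ideal.mul_mem_mul
        (Ideal.pow_mem_pow (Ideal.subset_span (Set.mem_range_self i)) e) ih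

lemma pow_le_span_monomials (μ : ℕ) :
    Ideal.span (Set.range (X : σ → MvPolynomial σ K)) ^ μ ≤
      Ideal.span ((fun d => monomial d (1 : K)) ''
        {d : σ →₀ ℕ | (d.sum fun _ e => e) = μ}) := by
  induction μ with
  | zero =>
      rw [pow_zero, Ideal.one_eq_top]
      intro x _
      have h1 : (monomial (0 : σ →₀ ℕ) (1 : K)) ∈ Ideal.span ((fun d => monomial d (1 : K)) ''
          {d : σ →₀ ℕ | (d.sum fun _ e => e) = 0}) :=
        Ideal.subset_span (Set.mem_image_of_mem _ (by simp))
      rw [monomial_zero', C_1] at h1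
      simpa using Ideal.mul_mem_left _ x h1
  | succ μ ih =>
      rw [pow_succ]
      calc _ ≤ Ideal.span ((fun d => monomial d (1 : K)) ''
                {d : σ →₀ ℕ | (d.sum fun _ e => e) = μ}) *
              Ideal.span (Set.range (X : σ → MvPolynomial σ K)) :=
            Ideal.mul_mono ih le_rfl
        _ ≤ _ := by
            rw [Ideal.span_mul_span']
            apply Ideal.span_le.mpr
            rintro x ⟨p, ⟨d, hd, rfl⟩, q, ⟨i, rfl⟩, rfl⟩
            have hx : (X i : MvPolynomial σ K) = monomial (Finsupp.single i 1) 1 := by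
              simp [X]
            apply Ideal.subset_span
            refine ⟨d + Finsupp.single i 1, ?_, by simp [hx, monomial_mul]⟩
            have hd' : (d.sum fun _ e => e) = μ := hd
            simp only [Set.mem_setOf_eq, deg_add, deg_single, hd']

/-- order at the origin -/
lemma mem_pow_span_X_iff (g : MvPolynomial σ K) (μ : ℕ) :
    g ∈ Ideal.span (Set.range (X : σ → MvPolynomial σ K)) ^ μ ↔
      ∀ d ∈ g.support, μ ≤ d.sum fun _ e => e := by
  constructor
  · intro hg d hd
    have := pow_le_span_monomials (K := K) (σ := σ) μ hg
    obtain ⟨s, hs, hsd⟩ := mem_ideal_span_monomial_image.mp this d hd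
    calc μ = s.sum fun _ e => e := hs.symm
      _ ≤ _ := deg_mono hsd
  · intro h
    rw [← support_sum_monomial_coeff g]
    refine Ideal.sum_mem _ fun d hd => ?_
    have h1 : monomial d (coeff d g) = C (coeff d g) * monomial d 1 := by
      rw [C_mul_monomial, mul_one]
    rw [h1]
    exact Ideal.mul_mem_left _ _
      (Ideal.pow_le_pow_right (h d hd) (monomial_mem_pow d))

/-- translation automorphism -/
noncomputable def transEquiv (c : σ → K) : MvPolynomial σ K ≃ₐ[K] MvPolynomial σ K :=
  AlgEquiv.ofAlgHom (aeval fun i => X i + C (c i)) (aeval fun i => X i - C (c i))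
    (by ext i : 1 <;> simp) (by ext i : 1 <;> simp)

lemma transEquiv_map_maxIdeal (c : σ → K) :
    Ideal.map (transEquiv c) (maxIdeal K σ c) = maxIdeal K σ 0 := by
  rw [maxIdeal, Ideal.map_span, maxIdeal_zero]
  congr 1
  rw [← Set.range_comp]
  refine congrArg Set.range (funext fun i => ?_)
  simp [transEquiv, sub_add_cancel_right]

lemma mem_maxIdeal_pow_iff_trans (c : σ → K) (g : MvPolynomial σ K) (μ : ℕ) :
    g ∈ maxIdeal K σ c ^ μ ↔
      transEquiv c g ∈ Ideal.span (Set.range (X : σ → MvPolynomial σ K)) ^ μ := by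
  rw [← maxIdeal_zero, ← transEquiv_map_maxIdeal c, ← Ideal.map_pow]
  constructor
  · intro h; exact Ideal.mem_map_of_mem _ h
  · intro h
    obtain ⟨x, hx, hxg⟩ := (Ideal.mem_map_iff_of_surjective _ (transEquiv c).surjective).mp h
    rwa [← (transEquiv c).injective hxg]

/-- coefficients of sumToIter -/
lemma coeff_coeff_sumToIter [DecidableEq σ] [DecidableEq τ] (g : MvPolynomial (σ ⊕ τ) K)
    (α : σ →₀ ℕ) (β : τ →₀ ℕ) :
    coeff β (coeff α (sumToIter K σ τ g)) = coeff (Finsupp.sumElim α β) g := by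
  induction g using MvPolynomial.induction_on' with
  | add p q hp hq => simp [map_add, coeff_add, hp, hq]
  | monomial d r =>
      have key : sumToIter K σ τ (monomial d r) =
          monomial (d.comapDomain Sum.inl Sum.inl_injective.injOn)
            (monomial (d.comapDomain Sum.inr Sum.inr_injective.injOn) r) := by
        induction d using Finsupp.induction generalizing r with
        | zero => simp [monomial_zero', sumToIter_C]
        | single_add j e d hj _ ih =>
            rw [monomial_single_add, map_mul, map_pow, ih]
            cases j with
            | inl j =>
                rw [sumToIter_Xl]
                have h1 : (Finsupp.single (Sum.inl j : σ ⊕ τ) e + d).comapDomain Sum.inl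
                    Sum.inl_injective.injOn = Finsupp.single j e +
                    d.comapDomain Sum.inl Sum.inl_injective.injOn := by
                  ext x; simp [Finsupp.comapDomain_apply, Finsupp.single_apply]
                have h2 : (Finsupp.single (Sum.inl j : σ ⊕ τ) e + d).comapDomain Sum.inr
                    Sum.inr_injective.injOn = d.comapDomain Sum.inr Sum.inr_injective.injOn := by
                  ext x; simp [Finsupp.comapDomain_apply, Finsupp.single_apply]
                rw [h1, h2, monomial_single_add]
            | inr j =>
                rw [sumToIter_Xr]
                have h1 : (Finsupp.single (Sum.inr j : σ ⊕ τ) e + d).comapDomain Sum.inl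
                    Sum.inl_injective.injOn = d.comapDomain Sum.inl Sum.inl_injective.injOn := by
                  ext x; simp [Finsupp.comapDomain_apply, Finsupp.single_apply]
                have h2 : (Finsupp.single (Sum.inr j : σ ⊕ τ) e + d).comapDomain Sum.inr
                    Sum.inr_injective.injOn = Finsupp.single j e +
                    d.comapDomain Sum.inr Sum.inr_injective.injOn := by
                  ext x; simp [Finsupp.comapDomain_apply, Finsupp.single_apply]
                rw [h1, h2, monomial_single_add, ← C_pow, C_mul_monomial]
      rw [key]
      by_cases h1 : Finsupp.comapDomain Sum.inl d Sum.inl_injective.injOn = α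
      · by_cases h2 : Finsupp.comapDomain Sum.inr d Sum.inr_injective.injOn = β
        · have hde : Finsupp.sumElim α β = d := by
            ext x
            cases x with
            | inl x => rw [Finsupp.sumElim_inl, ← h1]; rfl
            | inr x => rw [Finsupp.sumElim_inr, ← h2]; rfl
          rw [coeff_monomial, if_pos h1, coeff_monomial, if_pos h2,
            coeff_monomial, if_pos hde.symm]
        · have hde : Finsupp.sumElim α β ≠ d := fun hc => h2 (by
            ext x
            rw [← hc]
            simp [Finsupp.comapDomain_apply])
          rw [coeff_monomial, if_pos h1, coeff_monomial, if_neg h2,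
            coeff_monomial, if_neg (Ne.symm hde)]
      · have hde : Finsupp.sumElim α β ≠ d := fun hc => h1 (by
          ext x
          rw [← hc]
          simp [Finsupp.comapDomain_apply])
        rw [coeff_monomial, if_neg h1, coeff_zero, coeff_monomial, if_neg (Ne.symm hde)]

end Aux

/-- Expansion along a coordinate subspace: writing `f ∈ K[x_1,…,x_k,y_1,…,y_m]` as
`f = Σ_α c_α x^α` with `c_α ∈ K[y_1,…,y_m]`, and `a = (0,b)` a point of the subspace
`{x_1 = … = x_k = 0}`, one has `f ∈ m_a^μ` iff `c_α ∈ m_b^{μ-|α|}` for every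
multi-index `α` with `|α| < μ`. -/
theorem mem_maxIdeal_pow_iff_coeff (K : Type*) [Field K] (k m : ℕ) (hk : 1 ≤ k)
    (f : MvPolynomial (Fin k ⊕ Fin m) K) (b : Fin m → K) (μ : ℕ) :
    f ∈ maxIdeal K (Fin k ⊕ Fin m) (Sum.elim (fun _ => (0 : K)) b) ^ μ ↔
      ∀ α : Fin k →₀ ℕ, (α.sum fun _ e => e) < μ →
        MvPolynomial.coeff α ((MvPolynomial.sumAlgEquiv K (Fin k) (Fin m)) f) ∈
          maxIdeal K (Fin m) b ^ (μ - (α.sum fun _ e => e)) := by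
  classical
  set a : Fin k ⊕ Fin m → K := Sum.elim (fun _ => (0 : K)) b with ha
  -- compatibility of translation with sumToIter
  have comm : ∀ g : MvPolynomial (Fin k ⊕ Fin m) K,
      sumToIter K (Fin k) (Fin m) (transEquiv a g) =
        MvPolynomial.map (transEquiv b : MvPolynomial (Fin m) K →+* MvPolynomial (Fin m) K)
          (sumToIter K (Fin k) (Fin m) g) := by
    intro g
    have : (sumToIter K (Fin k) (Fin m)).comp ((transEquiv a : MvPolynomial _ K ≃ₐ[K] _) :
          MvPolynomial (Fin k ⊕ Fin m) K →+* MvPolynomial (Fin k ⊕ Fin m) K) =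
        (MvPolynomial.map (transEquiv b : MvPolynomial (Fin m) K →+* MvPolynomial (Fin m) K)).comp
          (sumToIter K (Fin k) (Fin m)) := by
      apply ringHom_ext
      · intro r
        simp [transEquiv, sumToIter_C]
      · rintro (i | j)
        · simp [transEquiv, ha, sumToIter_Xl, sumToIter_C]
        · simp [transEquiv, ha, sumToIter_Xr, sumToIter_C]
    exact DFunLike.congr_fun this g
  have hcoeff : ∀ α : Fin k →₀ ℕ,
      (transEquiv b) (coeff α ((sumAlgEquiv K (Fin k) (Fin m)) f)) =
        coeff α (sumToIter K (Fin k) (Fin m) (transEquiv a f)) := by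
    intro α
    rw [comm f, coeff_map]
    have hs : sumAlgEquiv K (Fin k) (Fin m) f = sumToIter K (Fin k) (Fin m) f := by
      have := ringHom_ext (f := ((sumAlgEquiv K (Fin k) (Fin m)) : MvPolynomial (Fin k ⊕ Fin m) K →+* _))
        (g := sumToIter K (Fin k) (Fin m)) (fun r => by simp [sumAlgEquiv_C_inl, sumToIter_C])
        (by rintro (i | j) <;> simp [sumAlgEquiv_X_inl, sumAlgEquiv_X_inr, sumToIter_Xl, sumToIter_Xr])
      exact DFunLike.congr_fun this f
    rw [hs]
    rfl
  have hsum : ∀ (α : Fin k →₀ ℕ) (β : Fin m →₀ ℕ),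
      ((Finsupp.sumElim α β).sum fun _ e => e) =
        (α.sum fun _ e => e) + (β.sum fun _ e => e) := by
    intro α β
    rw [Finsupp.sum_fintype _ _ (fun _ => rfl), Finsupp.sum_fintype _ _ (fun _ => rfl),
      Finsupp.sum_fintype _ _ (fun _ => rfl), Fintype.sum_sum_type]
    simp
  rw [mem_maxIdeal_pow_iff_trans a f μ, mem_pow_span_X_iff]
  constructor
  · intro h α hα
    rw [mem_maxIdeal_pow_iff_trans b _ _, mem_pow_span_X_iff]
    intro β hβ
    rw [mem_support_iff, hcoeff α, coeff_coeff_sumToIter] at hβ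
    have := h _ (mem_support_iff.mpr hβ)
    rw [hsum α β] at this
    omega
  · intro h d hd
    set α := Finsupp.comapDomain Sum.inl d Sum.inl_injective.injOn with hα
    set β := Finsupp.comapDomain Sum.inr d Sum.inr_injective.injOn with hβ
    have hdeq : Finsupp.sumElim α β = d := by
      ext x
      cases x with
      | inl x => rw [Finsupp.sumElim_inl]; rfl
      | inr x => rw [Finsupp.sumElim_inr]; rfl
    have hdsum : (d.sum fun _ e => e) = (α.sum fun _ e => e) + (β.sum fun _ e => e) := by
      rw [← hdeq, hsum]
    by_cases hαlt : (α.sum fun _ e => e) < μ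
    · have h' := h α hαlt
      rw [mem_maxIdeal_pow_iff_trans b _ _, mem_pow_span_X_iff] at h'
      have hβmem : β ∈ ((transEquiv b) (coeff α ((sumAlgEquiv K (Fin k) (Fin m)) f))).support := by
        rw [mem_support_iff, hcoeff α, coeff_coeff_sumToIter, hdeq]
        exact mem_support_iff.mp hd
      have := h' β hβmem
      omega
    · omega
end
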